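/- arXiv:2002.06706 — 8 statements merged into one kernel-verified Lean document; each statement's English description precedes it below -/
import Mathlib

section
/- Let E and F be nonempty HN data. Then δ(E, F) ≥ 0, and δ(E, F) = 0 if and only if μ_min(E) ≥ μ_max(F). -/
namespace HN

def slope (v : ℤ × ℤ) : ℚ := (v.2 : ℚ) / (v.1 : ℚ)

def cross (v w : ℤ × ℤ) : ℤ := v.1 * w.2 - v.2 * w.1

def IsHNDatum (E : List (ℤ × ℤ)) : Prop :=
  (∀ v ∈ E, 1 ≤ v.1) ∧ E.Pairwise (fun v w => slope w < slope v)

def rk (E : List (ℤ × ℤ)) : ℤ := (E.map Prod.fst).sum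

def deg (E : List (ℤ × ℤ)) : ℤ := (E.map Prod.snd).sum

def delta (E F : List (ℤ × ℤ)) : ℤ :=
  (E.map fun e => ((F.filter fun f => decide (slope e ≤ slope f)).map fun f => cross e f).sum).sum

def geSlope (E : List (ℤ × ℤ)) (μ : ℚ) : List (ℤ × ℤ) := E.filter fun v => decide (μ ≤ slope v)
def gtSlope (E : List (ℤ × ℤ)) (μ : ℚ) : List (ℤ × ℤ) := E.filter fun v => decide (μ < slope v)
def ltSlope (E : List (ℤ × ℤ)) (μ : ℚ) : List (ℤ × ℤ) := E.filter fun v => decide (slope v < μ)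

def sigmaList (E : List (ℤ × ℤ)) : List ℚ :=
  E.flatMap fun v => List.replicate v.1.toNat (slope v)

def sigmaSlope (E : List (ℤ × ℤ)) (i : ℕ) : ℚ := (sigmaList E).getD (i - 1) 0

def poly (E : List (ℤ × ℤ)) (k : ℕ) : ℚ := ((sigmaList E).take k).sum

def polySum (A B : List (ℤ × ℤ)) (k : ℕ) : ℚ :=
  (((sigmaList A ++ sigmaList B).mergeSort fun a b => decide (b ≤ a)).take k).sum

def SlopewiseDom (E F : List (ℤ × ℤ)) : Prop :=
  ∀ μ : ℚ, rk (geSlope F μ) ≤ rk (geSlope E μ)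

def StrongSlopewiseDom (E F : List (ℤ × ℤ)) : Prop :=
  SlopewiseDom E F ∧ ∀ μ : ℚ, rk (geSlope E μ) = rk (geSlope F μ) → geSlope E μ = geSlope F μ

def dual (E : List (ℤ × ℤ)) : List (ℤ × ℤ) := (E.map fun v => (v.1, -v.2)).reverse

def HNleSum (E A B : List (ℤ × ℤ)) : Prop :=
  rk E = rk A + rk B ∧ deg E = deg A + deg B ∧
    ∀ k : ℕ, (k : ℤ) ≤ rk E → poly E k ≤ polySum A B k

def HasVertex (V : List (ℤ × ℤ)) (j : ℕ) : Prop :=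
  (j : ℤ) = rk V ∨ sigmaSlope V (j + 1) < sigmaSlope V j


lemma slope_le_iff {e f : ℤ × ℤ} (he : 1 ≤ e.1) (hf : 1 ≤ f.1) :
    slope e ≤ slope f ↔ e.2 * f.1 ≤ e.1 * f.2 := by
  have he' : (0:ℚ) < (e.1:ℚ) := by exact_mod_cast he
  have hf' : (0:ℚ) < (f.1:ℚ) := by exact_mod_cast hf
  rw [slope, slope, div_le_div_iff₀ he' hf']
  constructor <;> intro h <;> [ (exact_mod_cast h.trans_eq (mul_comm _ _)) ; (exact_mod_cast h.trans_eq (mul_comm _ _)) ]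

lemma slope_lt_iff {e f : ℤ × ℤ} (he : 1 ≤ e.1) (hf : 1 ≤ f.1) :
    slope e < slope f ↔ e.2 * f.1 < e.1 * f.2 := by
  have he' : (0:ℚ) < (e.1:ℚ) := by exact_mod_cast he
  have hf' : (0:ℚ) < (f.1:ℚ) := by exact_mod_cast hf
  rw [slope, slope, div_lt_div_iff₀ he' hf']
  constructor <;> intro h <;> [ (exact_mod_cast h.trans_eq (mul_comm _ _)) ; (exact_mod_cast h.trans_eq (mul_comm _ _)) ]

lemma cross_nonneg {e f : ℤ × ℤ} (he : 1 ≤ e.1) (hf : 1 ≤ f.1) (h : slope e ≤ slope f) :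
    0 ≤ cross e f := by
  have := (slope_le_iff he hf).mp h
  simp only [cross]; omega

lemma cross_pos {e f : ℤ × ℤ} (he : 1 ≤ e.1) (hf : 1 ≤ f.1) (h : slope e < slope f) :
    0 < cross e f := by
  have := (slope_lt_iff he hf).mp h
  simp only [cross]; omega

lemma cross_eq_zero {e f : ℤ × ℤ} (he : 1 ≤ e.1) (hf : 1 ≤ f.1) (h : slope e = slope f) :
    cross e f = 0 := by
  have h1 := (slope_le_iff he hf).mp h.le
  have h2 := (slope_le_iff hf he).mp h.ge
  simp only [cross]
  linarith [mul_comm f.2 e.1, mul_comm f.1 e.2]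

lemma getLast_min : ∀ (E : List (ℤ × ℤ)) (h : E ≠ []),
    E.Pairwise (fun v w => slope w < slope v) → ∀ v ∈ E, slope (E.getLast h) ≤ slope v := by
  intro E
  induction E with
  | nil => simp
  | cons a t ih =>
    intro h hp v hv
    rcases List.pairwise_cons.mp hp with ⟨ha, ht⟩
    by_cases ht0 : t = []
    · subst ht0
      simp only [List.mem_singleton] at hv
      subst hv; simp
    · rw [List.getLast_cons ht0]
      rcases List.mem_cons.mp hv with rfl | hv
      · exact (ha _ (List.getLast_mem ht0)).le
      · exact ih ht0 ht v hv

lemma head_max (F : List (ℤ × ℤ)) (h : F ≠ [])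
    (hp : F.Pairwise (fun v w => slope w < slope v)) :
    ∀ v ∈ F, slope v ≤ slope (F.head h) := by
  cases F with
  | nil => simp at h
  | cons a t =>
    intro v hv
    rcases List.pairwise_cons.mp hp with ⟨ha, _⟩
    rcases List.mem_cons.mp hv with rfl | hv
    · simp
    · exact (ha v hv).le


/-- δ(E,F) ≥ 0, with δ(E,F) = 0 iff μ_min(E) ≥ μ_max(F). -/
theorem statement0 (E F : List (ℤ × ℤ)) (hE : IsHNDatum E) (hF : IsHNDatum F)
    (hEne : E ≠ []) (hFne : F ≠ []) :
    0 ≤ delta E F ∧ (delta E F = 0 ↔ slope (F.head hFne) ≤ slope (E.getLast hEne)) := by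
  obtain ⟨hE1, hE2⟩ := hE
  obtain ⟨hF1, hF2⟩ := hF
  have hinner : ∀ e ∈ E,
      0 ≤ ((F.filter fun f => decide (slope e ≤ slope f)).map fun f => cross e f).sum := by
    intro e he
    apply List.sum_nonneg
    intro x hx
    obtain ⟨f, hf, rfl⟩ := List.mem_map.mp hx
    have hfF := List.mem_filter.mp hf
    exact cross_nonneg (hE1 e he) (hF1 f hfF.1) (of_decide_eq_true hfF.2)
  have hnn : 0 ≤ delta E F := by
    apply List.sum_nonneg
    intro x hx
    obtain ⟨e, he, rfl⟩ := List.mem_map.mp hx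
    exact hinner e he
  refine ⟨hnn, ?_, ?_⟩
  · -- delta = 0 → slope head ≤ slope getLast
    intro h0
    by_contra hlt
    push_neg at hlt
    set e0 := E.getLast hEne with he0
    set f0 := F.head hFne with hf0
    have he0E : e0 ∈ E := List.getLast_mem hEne
    have hf0F : f0 ∈ F := List.head_mem hFne
    have hfilt : f0 ∈ F.filter fun f => decide (slope e0 ≤ slope f) :=
      List.mem_filter.mpr ⟨hf0F, decide_eq_true hlt.le⟩
    have hcross : cross e0 f0 ∈ (F.filter fun f => decide (slope e0 ≤ slope f)).map
        fun f => cross e0 f := List.mem_map.mpr ⟨f0, hfilt, rfl⟩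
    have hpos : 0 < cross e0 f0 := cross_pos (hE1 e0 he0E) (hF1 f0 hf0F) hlt
    have h1 : cross e0 f0 ≤ ((F.filter fun f => decide (slope e0 ≤ slope f)).map
        fun f => cross e0 f).sum := by
      apply List.single_le_sum _ _ hcross
      intro x hx
      obtain ⟨f, hf, rfl⟩ := List.mem_map.mp hx
      have hfF := List.mem_filter.mp hf
      exact cross_nonneg (hE1 e0 he0E) (hF1 f hfF.1) (of_decide_eq_true hfF.2)
    have h2 : ((F.filter fun f => decide (slope e0 ≤ slope f)).map fun f => cross e0 f).sum
        ≤ delta E F := by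
      apply List.single_le_sum
      · intro x hx
        obtain ⟨e, he, rfl⟩ := List.mem_map.mp hx
        exact hinner e he
      · exact List.mem_map.mpr ⟨e0, he0E, rfl⟩
    omega
  · -- slope head ≤ slope getLast → delta = 0
    intro hle
    apply List.sum_eq_zero
    intro x hx
    obtain ⟨e, he, rfl⟩ := List.mem_map.mp hx
    apply List.sum_eq_zero
    intro y hy
    obtain ⟨f, hf, rfl⟩ := List.mem_map.mp hy
    have hfF := List.mem_filter.mp hf
    have h1 : slope e ≤ slope f := of_decide_eq_true hfF.2
    have h2 : slope f ≤ slope (F.head hFne) := head_max F hFne hF2 f hfF.1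
    have h3 : slope (E.getLast hEne) ≤ slope e := getLast_min E hEne hE2 e he
    exact cross_eq_zero (hE1 e he) (hF1 f hfF.1) (le_antisymm h1 (h2.trans (hle.trans h3)))

end HN
end

section
/- For every HN datum V = (v_1, …, v_l) one has δ(V, V) = Σ_{1 ≤ j < i ≤ l} v_i × v_j (this quantity is twice the area of the region enclosed by the HN polygon of V and the line segment joining its two endpoints). Consequently δ(V, V) ≥ 0, with δ(V, V) = 0 if and only if V is semistable. -/
namespace HN

lemma sum_map_getD {α : Type*} (l : List α) (d : α) (g : α → ℤ) :
    (l.map g).sum = ∑ i ∈ Finset.range l.length, g (l.getD i d) := by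
  induction l with
  | nil => simp
  | cons a t ih =>
    rw [List.map_cons, List.sum_cons, List.length_cons, Finset.sum_range_succ']
    simp [ih, add_comm]

lemma sum_filter_map {α : Type*} (l : List α) (p : α → Bool) (g : α → ℤ) :
    ((l.filter p).map g).sum = (l.map fun x => if p x then g x else 0).sum := by
  induction l with
  | nil => simp
  | cons a t ih =>
    by_cases h : p a <;> simp [List.filter_cons, h, ih]


/-- δ(V,V) = Σ_{j<i} v_i × v_j ≥ 0, with equality iff V is semistable. -/
theorem statement3 (V : List (ℤ × ℤ)) (hV : IsHNDatum V) :
    delta V V = ∑ i ∈ Finset.range V.length, ∑ j ∈ Finset.range i,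
        cross (V.getD i (0, 0)) (V.getD j (0, 0)) ∧
      0 ≤ delta V V ∧ (delta V V = 0 ↔ V.length ≤ 1) := by
  set n := V.length with hn
  set v : ℕ → ℤ × ℤ := fun i => V.getD i (0, 0) with hv
  have hget : ∀ i (hi : i < n), v i = V[i]'hi := by
    intro i hi
    simp only [hv]
    exact List.getD_eq_getElem _ _ hi
  have hmono : ∀ i j, i < j → j < n → slope (v j) < slope (v i) := by
    intro i j hij hj
    have := List.pairwise_iff_getElem.mp hV.2 i j (hij.trans hj) hj hij
    rwa [hget i (hij.trans hj), hget j hj]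
  have hrk : ∀ i, i < n → 1 ≤ (v i).1 := by
    intro i hi
    rw [hget i hi]
    exact hV.1 _ (List.getElem_mem hi)
  have hcross : ∀ i j, j < i → i < n → 0 < cross (v i) (v j) := by
    intro i j hji hi
    have hj : j < n := hji.trans hi
    have hs := hmono j i hji hi
    have hri : (0:ℚ) < ((v i).1 : ℚ) := by exact_mod_cast hrk i hi
    have hrj : (0:ℚ) < ((v j).1 : ℚ) := by exact_mod_cast hrk j hj
    rw [slope, slope, div_lt_div_iff₀ hri hrj] at hs
    have : ((v i).2 : ℚ) * (v j).1 < ((v j).2 : ℚ) * (v i).1 := by exact_mod_cast hs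
    have h2 : (v i).2 * (v j).1 < (v j).2 * (v i).1 := by exact_mod_cast this
    simp only [cross]
    linarith [h2]
  have key : delta V V = ∑ i ∈ Finset.range n, ∑ j ∈ Finset.range i,
      cross (v i) (v j) := by
    rw [delta, sum_map_getD V (0,0)]
    apply Finset.sum_congr rfl
    intro i hi
    have hi' : i < n := Finset.mem_range.mp hi
    rw [sum_filter_map, sum_map_getD V (0,0)]
    have step1 : ∀ j ∈ Finset.range n,
        (if decide (slope (v i) ≤ slope (v j)) then cross (v i) (v j) else 0)
        = if j ≤ i then cross (v i) (v j) else 0 := by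
      intro j hj
      have hj' : j < n := Finset.mem_range.mp hj
      rcases lt_trichotomy j i with h | h | h
      · simp [decide_eq_true_eq, (hmono j i h hi').le, h.le]
      · subst h; simp
      · have := hmono i j h hj'
        simp [decide_eq_true_eq, not_le.mpr this, not_le.mpr h]
    rw [Finset.sum_congr rfl step1, ← Finset.sum_filter]
    have hfil : Finset.filter (fun j => j ≤ i) (Finset.range n) = Finset.range (i+1) := by
      ext j; simp [Nat.lt_succ_iff]; omega
    rw [hfil, Finset.sum_range_succ]
    simp [cross, mul_comm]
  refine ⟨key, ?_, ?_⟩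
  · rw [key]
    apply Finset.sum_nonneg
    intro i hi
    apply Finset.sum_nonneg
    intro j hj
    exact (hcross i j (Finset.mem_range.mp hj) (Finset.mem_range.mp hi)).le
  · rw [key]
    constructor
    · intro h
      by_contra hlen
      push_neg at hlen
      have h2 : 2 ≤ n := hlen
      have hterm : 0 < ∑ j ∈ Finset.range 1, cross (v 1) (v j) := by
        simpa using hcross 1 0 Nat.zero_lt_one h2
      have : 0 < ∑ i ∈ Finset.range n, ∑ j ∈ Finset.range i, cross (v i) (v j) := by
        apply Finset.sum_pos' 
        · intro i hi
          exact Finset.sum_nonneg fun j hj =>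
            (hcross i j (Finset.mem_range.mp hj) (Finset.mem_range.mp hi)).le
        · exact ⟨1, Finset.mem_range.mpr h2, hterm⟩
      omega
    · intro h
      apply Finset.sum_eq_zero
      intro i hi
      have : i = 0 := by have := Finset.mem_range.mp hi; omega
      subst this; simp


end HN
end

section
/- Let E and F be HN data such that E slopewise dominates F. Then deg(E^{≥0}) ≥ deg(F^{≥0}), i.e. the sum of the degrees d_i of the entries of E of slope ≥ 0 is at least the corresponding sum for F. -/
namespace HN

lemma key : ∀ (T S : Multiset ℚ),
    (∀ μ : ℚ, (T.filter (fun x => μ ≤ x)).card ≤ (S.filter (fun x => μ ≤ x)).card) →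
    (T.map (fun t => max t 0)).sum ≤ (S.map (fun s => max s 0)).sum := by
  intro T
  induction T using Multiset.strongInductionOn with
  | ih T ih =>
    intro S h
    rcases eq_or_ne T 0 with rfl | hne
    · simp only [Multiset.map_zero, Multiset.sum_zero]
      exact Multiset.sum_nonneg (by
        intro x hx
        obtain ⟨s, _, rfl⟩ := Multiset.mem_map.1 hx
        exact le_max_right _ _)
    · -- get max element t of T
      have hl : T.toList ≠ [] := by
        simpa using hne
      obtain ⟨t, htmax⟩ : ∃ t : ℚ, T.toList.maximum = (t : WithBot ℚ) := by
        rcases List.maximum_ne_bot_of_ne_nil hl |> Option.ne_none_iff_exists'.1 with ⟨t, ht⟩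
        exact ⟨t, ht⟩
      have htmem : t ∈ T := by
        have := List.maximum_mem htmax
        simpa using this
      have htle : ∀ x ∈ T, x ≤ t := by
        intro x hx
        have : x ∈ T.toList := by simpa using hx
        exact List.le_maximum_of_mem this htmax
      -- find s ∈ S with t ≤ s
      have h1 : 0 < (S.filter (fun x => t ≤ x)).card := by
        have ht' : t ∈ T.filter (fun x => t ≤ x) := Multiset.mem_filter.2 ⟨htmem, le_rfl⟩
        have : 0 < (T.filter (fun x => t ≤ x)).card :=
          Multiset.card_pos_iff_exists_mem.2 ⟨t, ht'⟩
        exact lt_of_lt_of_le this (h t)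
      obtain ⟨s, hs⟩ := Multiset.card_pos_iff_exists_mem.1 h1
      have hsS : s ∈ S := (Multiset.mem_filter.1 hs).1
      have hts : t ≤ s := by simpa using (Multiset.mem_filter.1 hs).2
      have hdom : ∀ μ : ℚ, ((T.erase t).filter (fun x => μ ≤ x)).card ≤
          ((S.erase s).filter (fun x => μ ≤ x)).card := by
        intro μ
        by_cases hμ : μ ≤ t
        · have hT : T.filter (fun x => μ ≤ x) = t ::ₘ (T.erase t).filter (fun x => μ ≤ x) := by
            conv_lhs => rw [← Multiset.cons_erase htmem]
            exact Multiset.filter_cons_of_pos _ (by simpa using hμ)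
          have hS : S.filter (fun x => μ ≤ x) = s ::ₘ (S.erase s).filter (fun x => μ ≤ x) := by
            conv_lhs => rw [← Multiset.cons_erase hsS]
            exact Multiset.filter_cons_of_pos _ (by simpa using le_trans hμ hts)
          have := h μ
          rw [hT, hS, Multiset.card_cons, Multiset.card_cons] at this
          omega
        · have : (T.erase t).filter (fun x => μ ≤ x) = 0 := by
            rw [Multiset.filter_eq_nil]  -- name?
            intro x hx
            have hxT : x ∈ T := Multiset.mem_of_mem_erase hx
            have := htle x hxT
            push_neg at hμ
            exact not_le.2 (lt_of_le_of_lt this hμ)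
          rw [this]
          simp
      have hsum := ih (T.erase t) (Multiset.erase_lt.2 htmem) (S.erase s) hdom
      have hT' : T = t ::ₘ T.erase t := (Multiset.cons_erase htmem).symm
      have hS' : S = s ::ₘ S.erase s := (Multiset.cons_erase hsS).symm
      rw [hT', hS', Multiset.map_cons, Multiset.map_cons, Multiset.sum_cons, Multiset.sum_cons]
      exact add_le_add (max_le_max hts le_rfl) hsum

lemma rk_eq_length (μ : ℚ) : ∀ (E : List (ℤ × ℤ)), (∀ v ∈ E, 1 ≤ v.1) →
    rk (geSlope E μ) = (((sigmaList E).filter (fun σ => decide (μ ≤ σ))).length : ℤ) := by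
  intro E
  induction E with
  | nil => simp [rk, geSlope, sigmaList]
  | cons v E ih =>
    intro hv
    have hr : 1 ≤ v.1 := hv v (by simp)
    have ih' := ih (fun w hw => hv w (by simp [hw]))
    simp only [sigmaList, List.flatMap_cons, List.filter_append, List.length_append]
    have hs : (E.flatMap fun v => List.replicate v.1.toNat (slope v)) = sigmaList E := rfl
    rw [hs]
    by_cases hμ : μ ≤ slope v
    · have h1 : geSlope (v :: E) μ = v :: geSlope E μ := by
        simp [geSlope, List.filter_cons, hμ]
      have h2 : (List.replicate v.1.toNat (slope v)).filter (fun σ => decide (μ ≤ σ)) =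
          List.replicate v.1.toNat (slope v) := by
        rw [List.filter_eq_self]
        intro a ha
        rw [List.eq_of_mem_replicate ha]
        simpa using hμ
      rw [h1, h2]
      simp only [rk, List.map_cons, List.sum_cons, List.length_replicate]
      rw [show (List.map Prod.fst (geSlope E μ)).sum = rk (geSlope E μ) from rfl, ih']
      push_cast
      omega
    · have h1 : geSlope (v :: E) μ = geSlope E μ := by
        simp [geSlope, List.filter_cons, hμ]
      have h2 : (List.replicate v.1.toNat (slope v)).filter (fun σ => decide (μ ≤ σ)) = [] := by
        rw [List.filter_eq_nil_iff]
        intro a ha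
        rw [List.eq_of_mem_replicate ha]
        simpa using hμ
      rw [h1, h2]
      simpa using ih'

lemma deg_eq_sum : ∀ (E : List (ℤ × ℤ)), (∀ v ∈ E, 1 ≤ v.1) →
    ((deg (geSlope E 0) : ℚ)) = ((sigmaList E).map (fun σ => max σ 0)).sum := by
  intro E
  induction E with
  | nil => simp [deg, geSlope, sigmaList]
  | cons v E ih =>
    intro hv
    have hr : 1 ≤ v.1 := hv v (by simp)
    have hr0 : (v.1 : ℚ) ≠ 0 := by
      have : (0:ℚ) < (v.1 : ℚ) := by exact_mod_cast lt_of_lt_of_le zero_lt_one hr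
      exact ne_of_gt this
    have ih' := ih (fun w hw => hv w (by simp [hw]))
    simp only [sigmaList, List.flatMap_cons, List.map_append, List.sum_append]
    have hs : (E.flatMap fun v => List.replicate v.1.toNat (slope v)) = sigmaList E := rfl
    rw [hs]
    by_cases hμ : (0:ℚ) ≤ slope v
    · have h1 : geSlope (v :: E) 0 = v :: geSlope E 0 := by
        simp [geSlope, List.filter_cons, hμ]
      have h2 : ((List.replicate v.1.toNat (slope v)).map (fun σ => max σ 0)).sum = (v.2 : ℚ) := by
        rw [List.map_replicate, List.sum_replicate, max_eq_left hμ]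
        rw [nsmul_eq_mul]
        have : ((v.1.toNat : ℚ)) = (v.1 : ℚ) := by
          exact_mod_cast Int.toNat_of_nonneg (by omega)
        rw [this, slope, mul_div_cancel₀ _ hr0]
      rw [h1, show deg (v :: geSlope E 0) = v.2 + deg (geSlope E 0) from by simp [deg],
        Int.cast_add, ih', h2]
    · have h1 : geSlope (v :: E) 0 = geSlope E 0 := by
        simp [geSlope, List.filter_cons, hμ]
      have h2 : ((List.replicate v.1.toNat (slope v)).map (fun σ => max σ 0)).sum = 0 := by
        rw [List.map_replicate, List.sum_replicate, max_eq_right (le_of_lt (not_le.1 hμ))]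
        simp
      rw [h1, h2, ih', zero_add]

/-- If E slopewise dominates F then deg(E^{≥0}) ≥ deg(F^{≥0}). -/
theorem statement6 (E F : List (ℤ × ℤ)) (hE : IsHNDatum E) (hF : IsHNDatum F)
    (h : SlopewiseDom E F) :
    deg (geSlope F 0) ≤ deg (geSlope E 0) := by
  have hQ : ((deg (geSlope F 0) : ℚ)) ≤ ((deg (geSlope E 0) : ℚ)) := by
    rw [deg_eq_sum E hE.1, deg_eq_sum F hF.1]
    have := key (↑(sigmaList F)) (↑(sigmaList E)) ?_
    · simpa using this
    · intro μ
      have h1 := rk_eq_length μ E hE.1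
      have h2 := rk_eq_length μ F hF.1
      have h3 := h μ
      rw [h1, h2] at h3
      have h4 : ((sigmaList F).filter (fun σ => decide (μ ≤ σ))).length ≤
          ((sigmaList E).filter (fun σ => decide (μ ≤ σ))).length := by exact_mod_cast h3
      simpa [Multiset.filter_coe] using h4
  exact_mod_cast hQ

end HN
end

section
/- Let E and F be HN data. Say that the HN polygon of an HN datum V has a vertex at an integer j with 0 < j ≤ rk(V) if j = rk(V) or σ_V(j) > σ_V(j+1). Then E strongly slopewise dominates F if and only if the following two conditions hold: (i) rk(E) ≥ rk(F) and σ_F(i) ≤ σ_E(i) for every integer 1 ≤ i ≤ rk(F); (ii) for every integer j with 0 < j ≤ rk(F) such that the HN polygons of both E and F have a vertex at j, either σ_E(i) = σ_F(i) for all 1 ≤ i ≤ j (the two polygons agree on [0, j]), or j < rk(E) and σ_F(j) ≤ σ_E(j+1). -/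
namespace List

theorem take_eq_take_iff_getD {α : Type*} {l l' : List α} {k : ℕ}
    (hk : k ≤ l.length) (hk' : k ≤ l'.length) (d : α) :
    l.take k = l'.take k ↔ ∀ i < k, l.getD i d = l'.getD i d := by
  rw [ext_getElem_iff]
  simp only [length_take, hk, hk', min_eq_left, getElem_take, true_and]
  refine ⟨fun h i hi => ?_, fun h i hi _ => ?_⟩
  · rw [getD_eq_getElem _ _ (by omega), getD_eq_getElem _ _ (by omega), h i hi hi]
  · have := h i hi
    rwa [getD_eq_getElem _ _ (by omega), getD_eq_getElem _ _ (by omega)] at this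

namespace SortedGE

variable {α : Type*} [Preorder α] [DecidableLE α] {l : List α}

theorem filter_le_eq_take_countP (hl : l.SortedGE) (μ : α) :
    l.filter (μ ≤ ·) = l.take (l.countP (μ ≤ ·)) := by
  induction l with
  | nil => rfl
  | cons a l ih =>
    obtain ⟨ha, hl'⟩ := pairwise_cons.1 hl.pairwise
    by_cases hμ : μ ≤ a
    · simp [hμ, ih hl'.sortedGE]
    · have hnone : ∀ b ∈ l, ¬μ ≤ b := fun b hb h => hμ (h.trans (ha b hb))
      have hfilter : l.filter (μ ≤ ·) = [] := filter_eq_nil_iff.2 (by simpa using hnone)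
      have hcount : l.countP (μ ≤ ·) = 0 := countP_eq_zero.2 (by simpa using hnone)
      simp [hμ, hfilter, hcount]

theorem lt_countP_le_iff (hl : l.SortedGE) (μ : α) {i : ℕ} (hi : i < l.length) :
    i < l.countP (μ ≤ ·) ↔ μ ≤ l[i] := by
  constructor
  · intro h
    have : l[i] ∈ l.filter (μ ≤ ·) := by
      rw [hl.filter_le_eq_take_countP]
      exact mem_iff_getElem.2 ⟨i, by simp [h, hi], getElem_take⟩
    simpa using of_mem_filter this
  · intro h
    have hprefix : (l.take (i + 1)).countP (μ ≤ ·) = i + 1 := by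
      rw [countP_eq_length.2, length_take_of_le hi]
      intro a ha
      obtain ⟨k, hk, rfl⟩ := mem_iff_getElem.1 ha
      simp only [length_take, lt_min_iff] at hk
      simpa using h.trans (sortedGE_iff_getElem_ge_getElem_of_le.1 hl (by omega))
    have := (take_sublist (i + 1) l).countP_le (p := fun x => decide (μ ≤ x))
    omega

end SortedGE

end List

namespace HN

variable {E F V : List (ℤ × ℤ)}

theorem IsHNDatum.rank_nonneg (hE : IsHNDatum E) : ∀ v ∈ E, 0 ≤ v.1 :=
  fun v hv => zero_le_one.trans (hE.1 v hv)

theorem IsHNDatum.geSlope (hE : IsHNDatum E) (μ : ℚ) : IsHNDatum (geSlope E μ) :=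
  ⟨fun v hv => hE.1 v (List.mem_of_mem_filter hv), hE.2.filter _⟩

theorem length_sigmaList (hE : ∀ v ∈ E, 0 ≤ v.1) : ((sigmaList E).length : ℤ) = rk E := by
  simp only [sigmaList, rk, List.length_flatMap, List.length_replicate, Nat.cast_list_sum,
    List.map_map]
  exact congrArg List.sum (List.map_congr_left fun v hv => by simp [hE v hv])

theorem sigmaList_geSlope (E : List (ℤ × ℤ)) (μ : ℚ) :
    sigmaList (geSlope E μ) = (sigmaList E).filter (μ ≤ ·) := by
  induction E with
  | nil => rfl
  | cons v E ih =>
    by_cases h : μ ≤ slope v <;> simp_all [sigmaList, geSlope]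

theorem rk_geSlope (hE : ∀ v ∈ E, 0 ≤ v.1) (μ : ℚ) :
    rk (geSlope E μ) = (sigmaList E).countP (μ ≤ ·) := by
  rw [← length_sigmaList (E := geSlope E μ) fun v hv => hE v (List.mem_of_mem_filter hv),
    sigmaList_geSlope, List.countP_eq_length_filter]

theorem rk_geSlope_le (hE : ∀ v ∈ E, 0 ≤ v.1) (μ : ℚ) : rk (geSlope E μ) ≤ rk E := by
  rw [rk_geSlope hE, ← length_sigmaList hE]
  exact_mod_cast List.countP_le_length

theorem IsHNDatum.sigmaList_sortedGE (hE : IsHNDatum E) : (sigmaList E).SortedGE := by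
  refine List.Pairwise.sortedGE ?_
  rw [sigmaList, List.pairwise_flatMap]
  refine ⟨fun v _ => List.pairwise_replicate.2 (Or.inr le_rfl), hE.2.imp fun h x hx y hy => ?_⟩
  rw [List.eq_of_mem_replicate hx, List.eq_of_mem_replicate hy]
  exact h.le

theorem eq_of_slope_eq_of_fst_eq {v w : ℤ × ℤ} (hv : v.1 ≠ 0) (hr : v.1 = w.1)
    (hs : slope v = slope w) : v = w := by
  refine Prod.ext hr ?_
  rw [slope, slope, ← hr, div_left_inj' (by exact_mod_cast hv)] at hs
  exact_mod_cast hs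

theorem head?_sigmaList_cons {v : ℤ × ℤ} (hv : 1 ≤ v.1) (A : List (ℤ × ℤ)) :
    (sigmaList (v :: A)).head? = some (slope v) := by
  obtain ⟨n, hn⟩ : ∃ n, v.1.toNat = n + 1 := ⟨v.1.toNat - 1, by omega⟩
  simp [sigmaList, hn, List.replicate_succ]

theorem count_sigmaList_cons {v : ℤ × ℤ} {A : List (ℤ × ℤ)} (h : IsHNDatum (v :: A)) :
    (sigmaList (v :: A)).count (slope v) = v.1.toNat := by
  have hlt : ∀ w ∈ A, slope w < slope v := fun _ hw => List.rel_of_pairwise_cons h.2 hw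
  have hA : (sigmaList A).count (slope v) = 0 := by
    simp only [List.count_eq_zero, sigmaList, List.mem_flatMap, List.mem_replicate, not_exists]
    rintro w ⟨hw, -, hsw⟩
    exact (hlt w hw).ne' hsw
  rw [sigmaList, List.flatMap_cons, List.count_append, List.count_replicate_self]
  exact congrArg (v.1.toNat + ·) hA

theorem IsHNDatum.eq_of_sigmaList_eq (hE : IsHNDatum E) (hF : IsHNDatum F)
    (h : sigmaList E = sigmaList F) : E = F := by
  induction E generalizing F with
  | nil =>
    cases F with
    | nil => rfl
    | cons w B =>
      have := head?_sigmaList_cons (hF.1 w (by simp)) B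
      rw [← h] at this
      simp [sigmaList] at this
  | cons v A ih =>
    cases F with
    | nil =>
      have := head?_sigmaList_cons (hE.1 v (by simp)) A
      rw [h] at this
      simp [sigmaList] at this
    | cons w B =>
      have hv := hE.1 v (by simp)
      have hw := hF.1 w (by simp)
      have hs : slope v = slope w := by
        simpa [head?_sigmaList_cons hv, head?_sigmaList_cons hw] using congrArg List.head? h
      have hr : v.1 = w.1 := by
        have := count_sigmaList_cons hE
        rw [h, hs, count_sigmaList_cons hF] at this
        omega
      obtain rfl := eq_of_slope_eq_of_fst_eq (by omega) hr hs
      have htail : sigmaList A = sigmaList B := List.append_cancel_left h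
      rw [ih ⟨fun x hx => hE.1 x (by simp [hx]), hE.2.of_cons⟩
        ⟨fun x hx => hF.1 x (by simp [hx]), hF.2.of_cons⟩ htail]

theorem le_rk_geSlope_iff (hE : IsHNDatum E) (μ : ℚ) {k : ℕ} (hk : 1 ≤ k)
    (hkE : (k : ℤ) ≤ rk E) : (k : ℤ) ≤ rk (geSlope E μ) ↔ μ ≤ sigmaSlope E k := by
  have hlen := length_sigmaList hE.rank_nonneg
  rw [rk_geSlope hE.rank_nonneg, sigmaSlope, List.getD_eq_getElem _ _ (by omega),
    ← hE.sigmaList_sortedGE.lt_countP_le_iff μ]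
  omega

theorem rk_geSlope_le_iff (hE : IsHNDatum E) (μ : ℚ) {j : ℕ} (hjE : (j : ℤ) < rk E) :
    rk (geSlope E μ) ≤ j ↔ sigmaSlope E (j + 1) < μ := by
  have := le_rk_geSlope_iff hE μ (k := j + 1) (by omega) (by push_cast; omega)
  push_cast at this
  rw [← not_le, ← this]
  omega

theorem geSlope_eq_geSlope_iff (hE : IsHNDatum E) (hF : IsHNDatum F) {μ : ℚ}
    (h : rk (geSlope E μ) = rk (geSlope F μ)) :
    geSlope E μ = geSlope F μ ↔
      ∀ i : ℕ, 1 ≤ i → (i : ℤ) ≤ rk (geSlope E μ) → sigmaSlope E i = sigmaSlope F i := by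
  have hcount : (sigmaList E).countP (μ ≤ ·) = (sigmaList F).countP (μ ≤ ·) := by
    rw [rk_geSlope hE.rank_nonneg, rk_geSlope hF.rank_nonneg] at h
    exact_mod_cast h
  have hprefix : geSlope E μ = geSlope F μ ↔
      (sigmaList E).take ((sigmaList E).countP (μ ≤ ·)) =
        (sigmaList F).take ((sigmaList E).countP (μ ≤ ·)) := by
    rw [← hE.sigmaList_sortedGE.filter_le_eq_take_countP, hcount,
      ← hF.sigmaList_sortedGE.filter_le_eq_take_countP, ← sigmaList_geSlope, ← sigmaList_geSlope]
    exact ⟨congrArg sigmaList, (hE.geSlope μ).eq_of_sigmaList_eq (hF.geSlope μ)⟩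
  have hlenE := length_sigmaList hE.rank_nonneg
  have hlenF := length_sigmaList hF.rank_nonneg
  have hcE := rk_geSlope_le hE.rank_nonneg μ
  have hcF := rk_geSlope_le hF.rank_nonneg μ
  rw [rk_geSlope hE.rank_nonneg] at hcE ⊢
  rw [rk_geSlope hF.rank_nonneg, ← hcount] at hcF
  rw [hprefix, List.take_eq_take_iff_getD (by omega) (by omega) 0]
  refine ⟨fun h' i hi _ => h' (i - 1) (by omega), fun h' i hi => ?_⟩
  simpa [sigmaSlope] using h' (i + 1) (by omega) (by omega)

theorem slopewiseDom_iff (hE : IsHNDatum E) (hF : IsHNDatum F) :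
    SlopewiseDom E F ↔
      rk F ≤ rk E ∧ ∀ i : ℕ, 1 ≤ i → (i : ℤ) ≤ rk F → sigmaSlope F i ≤ sigmaSlope E i := by
  have hE₀ := hE.rank_nonneg
  have hF₀ := hF.rank_nonneg
  constructor
  · intro hdom
    have hpoint : ∀ i : ℕ, 1 ≤ i → (i : ℤ) ≤ rk F →
        (i : ℤ) ≤ rk E ∧ sigmaSlope F i ≤ sigmaSlope E i := by
      intro i hi hiF
      have hiE : (i : ℤ) ≤ rk (geSlope E (sigmaSlope F i)) :=
        ((le_rk_geSlope_iff hF _ hi hiF).2 le_rfl).trans (hdom _)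
      have hiE' := hiE.trans (rk_geSlope_le hE₀ _)
      exact ⟨hiE', (le_rk_geSlope_iff hE _ hi hiE').1 hiE⟩
    refine ⟨?_, fun i hi hiF => (hpoint i hi hiF).2⟩
    obtain ⟨n, hn⟩ : ∃ n : ℕ, rk F = n := ⟨_, (length_sigmaList hF₀).symm⟩
    rcases Nat.eq_zero_or_pos n with rfl | hpos
    · rw [hn, ← length_sigmaList hE₀]
      exact_mod_cast Nat.zero_le _
    · exact hn ▸ (hpoint n hpos hn.ge).1
  · rintro ⟨hrk, hle⟩ μ
    obtain ⟨k, hk⟩ : ∃ k : ℕ, rk (geSlope F μ) = k := ⟨_, rk_geSlope hF₀ μ⟩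
    rcases Nat.eq_zero_or_pos k with rfl | hpos
    · rw [hk, rk_geSlope hE₀]
      exact_mod_cast Nat.zero_le _
    have hkF : (k : ℤ) ≤ rk F := hk ▸ rk_geSlope_le hF₀ μ
    rw [hk, le_rk_geSlope_iff hE μ hpos (hkF.trans hrk)]
    exact ((le_rk_geSlope_iff hF μ hpos hkF).1 hk.ge).trans (hle k hpos hkF)

theorem StrongSlopewiseDom.agree_or_sigmaSlope_le (hE : IsHNDatum E) (hF : IsHNDatum F)
    (h : StrongSlopewiseDom E F) {j : ℕ} (hj : 0 < j) (hjF : (j : ℤ) ≤ rk F) :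
    (∀ i : ℕ, 1 ≤ i → i ≤ j → sigmaSlope E i = sigmaSlope F i) ∨
      ((j : ℤ) < rk E ∧ sigmaSlope F j ≤ sigmaSlope E (j + 1)) := by
  by_cases hjump : (j : ℤ) < rk E ∧ sigmaSlope F j ≤ sigmaSlope E (j + 1)
  · exact Or.inr hjump
  left
  set μ := sigmaSlope F j
  have hjF' : (j : ℤ) ≤ rk (geSlope F μ) := (le_rk_geSlope_iff hF μ hj hjF).2 le_rfl
  have hjE : rk (geSlope E μ) ≤ j := by
    by_cases hjE : (j : ℤ) < rk E
    · exact (rk_geSlope_le_iff hE μ hjE).2 (lt_of_not_ge fun h' => hjump ⟨hjE, h'⟩)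
    · exact (rk_geSlope_le hE.rank_nonneg μ).trans (by omega)
  have hrk : rk (geSlope E μ) = rk (geSlope F μ) := le_antisymm (hjE.trans hjF') (h.1 μ)
  have hagree := (geSlope_eq_geSlope_iff hE hF hrk).1 (h.2 μ hrk)
  exact fun i hi hij => hagree i hi (by omega)

theorem hasVertex_of_rk_geSlope_eq (hV : IsHNDatum V) {μ : ℚ} {j : ℕ} (hj : 0 < j)
    (h : rk (geSlope V μ) = j) : HasVertex V j := by
  have hjV : (j : ℤ) ≤ rk V := h ▸ rk_geSlope_le hV.rank_nonneg μ
  rcases hjV.eq_or_lt with hjV | hjV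
  · exact Or.inl hjV
  · exact Or.inr (((rk_geSlope_le_iff hV μ hjV).1 h.le).trans_le
      ((le_rk_geSlope_iff hV μ hj hjV.le).1 h.ge))

theorem strongSlopewiseDom_of_agree_or_sigmaSlope_le (hE : IsHNDatum E) (hF : IsHNDatum F)
    (hdom : SlopewiseDom E F)
    (hvert : ∀ j : ℕ, 0 < j → (j : ℤ) ≤ rk F → HasVertex E j → HasVertex F j →
      (∀ i : ℕ, 1 ≤ i → i ≤ j → sigmaSlope E i = sigmaSlope F i) ∨
        ((j : ℤ) < rk E ∧ sigmaSlope F j ≤ sigmaSlope E (j + 1))) :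
    StrongSlopewiseDom E F := by
  refine ⟨hdom, fun μ hrk => ?_⟩
  obtain ⟨j, hj⟩ : ∃ j : ℕ, rk (geSlope E μ) = j := ⟨_, rk_geSlope hE.rank_nonneg μ⟩
  rw [geSlope_eq_geSlope_iff hE hF hrk, hj]
  rcases Nat.eq_zero_or_pos j with rfl | hpos
  · intro i hi hij
    omega
  have hjF : (j : ℤ) ≤ rk F := hj ▸ hrk ▸ rk_geSlope_le hF.rank_nonneg μ
  rcases hvert j hpos hjF (hasVertex_of_rk_geSlope_eq hE hpos hj)
      (hasVertex_of_rk_geSlope_eq hF hpos (hrk ▸ hj)) with hagree | ⟨hjE, hjump⟩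
  · exact fun i hi hij => hagree i hi (by exact_mod_cast hij)
  · have hμ := (le_rk_geSlope_iff hF μ hpos hjF).1 (hrk ▸ hj).ge
    exact absurd (hμ.trans hjump) (not_le.2 ((rk_geSlope_le_iff hE μ hjE).1 hj.le))

/-- Strong slopewise dominance in terms of HN polygons: the slopewise inequality
together with the vertex condition. -/
theorem statement8 (E F : List (ℤ × ℤ)) (hE : IsHNDatum E) (hF : IsHNDatum F) :
    StrongSlopewiseDom E F ↔
      ((rk F ≤ rk E ∧ ∀ i : ℕ, 1 ≤ i → (i : ℤ) ≤ rk F → sigmaSlope F i ≤ sigmaSlope E i) ∧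
        ∀ j : ℕ, 0 < j → (j : ℤ) ≤ rk F → HasVertex E j → HasVertex F j →
          (∀ i : ℕ, 1 ≤ i → i ≤ j → sigmaSlope E i = sigmaSlope F i) ∨
            ((j : ℤ) < rk E ∧ sigmaSlope F j ≤ sigmaSlope E (j + 1))) := by
  rw [← slopewiseDom_iff hE hF]
  exact ⟨fun h => ⟨h.1, fun j hj hjF _ _ => h.agree_or_sigmaSlope_le hE hF hj hjF⟩,
    fun ⟨hdom, hvert⟩ => strongSlopewiseDom_of_agree_or_sigmaSlope_le hE hF hdom hvert⟩

end HN
end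

section
/- Let V be an HN datum and μ ∈ ℚ. Then δ(V, V) − δ(V^{≥μ}, V^{≥μ}) − δ(V^{<μ}, V^{<μ}) equals the cross product of the total vector (rk(V^{<μ}), deg(V^{<μ})) with the total vector (rk(V^{≥μ}), deg(V^{≥μ})). In particular δ(V^{≥μ}, V^{≥μ}) + δ(V^{<μ}, V^{<μ}) ≤ δ(V, V), with equality if and only if V^{≥μ} is empty or V^{<μ} is empty. -/
namespace HN

/-! The sum over pairs defining `delta V V` splits into four blocks along `V^{≥μ} ++ V^{<μ}`.
The block `δ(V^{≥μ}, V^{<μ})` has no admissible pair, while in `δ(V^{<μ}, V^{≥μ})` every pair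
is admissible, so by bilinearity of `cross` it is the cross product of the two total vectors.
Each term of that block is positive when the ranks are positive, whence the inequality and its
equality case. -/

lemma sum_map_cross_right (e : ℤ × ℤ) (F : List (ℤ × ℤ)) :
    (F.map (cross e)).sum = cross e (rk F, deg F) := by
  induction F with
  | nil => simp [cross, rk, deg]
  | cons f F ih =>
    rw [List.map_cons, List.sum_cons, ih]
    simp only [cross, rk, deg, List.map_cons, List.sum_cons]
    ring

lemma sum_map_cross_left (E : List (ℤ × ℤ)) (w : ℤ × ℤ) :
    (E.map (cross · w)).sum = cross (rk E, deg E) w := by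
  induction E with
  | nil => simp [cross, rk, deg]
  | cons e E ih =>
    rw [List.map_cons, List.sum_cons, ih]
    simp only [cross, rk, deg, List.map_cons, List.sum_cons]
    ring

lemma cross_rk_deg_eq_sum_sum (E F : List (ℤ × ℤ)) :
    cross (rk E, deg E) (rk F, deg F) = (E.map fun e => (F.map (cross e)).sum).sum := by
  simp only [sum_map_cross_right, sum_map_cross_left]

lemma cross_pos_of_slope_lt {v w : ℤ × ℤ} (hv : 0 < v.1) (hw : 0 < w.1)
    (h : slope v < slope w) : 0 < cross v w := by
  rw [slope, slope, div_lt_div_iff₀ (by exact_mod_cast hv) (by exact_mod_cast hw)] at h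
  have : v.2 * w.1 < w.2 * v.1 := by exact_mod_cast h
  simp only [cross]
  linarith

lemma delta_append_left (E₁ E₂ F : List (ℤ × ℤ)) :
    delta (E₁ ++ E₂) F = delta E₁ F + delta E₂ F := by
  simp only [delta, List.map_append, List.sum_append]

lemma delta_append_right (E F₁ F₂ : List (ℤ × ℤ)) :
    delta E (F₁ ++ F₂) = delta E F₁ + delta E F₂ := by
  simp only [delta, List.filter_append, List.map_append, List.sum_append, List.sum_map_add]

lemma delta_perm {E E' F F' : List (ℤ × ℤ)} (hE : E.Perm E') (hF : F.Perm F') :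
    delta E F = delta E' F' := by
  unfold delta
  rw [(hE.map _).sum_eq]
  congr 1
  exact List.map_congr_left fun e _ => ((hF.filter _).map _).sum_eq

lemma delta_eq_zero_of_forall_slope_lt {E F : List (ℤ × ℤ)}
    (h : ∀ e ∈ E, ∀ f ∈ F, slope f < slope e) : delta E F = 0 := by
  refine List.sum_eq_zero fun x hx => ?_
  obtain ⟨e, he, rfl⟩ := List.mem_map.mp hx
  rw [List.filter_eq_nil_iff.mpr fun f hf => by simpa using h e he f hf]
  rfl

lemma delta_eq_cross_of_forall_slope_le {E F : List (ℤ × ℤ)}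
    (h : ∀ e ∈ E, ∀ f ∈ F, slope e ≤ slope f) :
    delta E F = cross (rk E, deg E) (rk F, deg F) := by
  rw [cross_rk_deg_eq_sum_sum, delta]
  congr 1
  exact List.map_congr_left fun e he => by
    rw [List.filter_eq_self.mpr fun f hf => by simpa using h e he f hf]

lemma geSlope_append_ltSlope_perm (V : List (ℤ × ℤ)) (μ : ℚ) :
    (geSlope V μ ++ ltSlope V μ).Perm V := by
  have hlt : ltSlope V μ = V.filter fun v => !decide (μ ≤ slope v) :=
    List.filter_congr fun v _ => by rw [← decide_not]; exact decide_eq_decide.mpr not_le.symm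
  rw [geSlope, hlt]
  exact List.filter_append_perm _ V

lemma slope_le_of_mem_geSlope {V : List (ℤ × ℤ)} {μ : ℚ} {v : ℤ × ℤ}
    (h : v ∈ geSlope V μ) : μ ≤ slope v := by
  simpa using (List.mem_filter.mp h).2

lemma slope_lt_of_mem_ltSlope {V : List (ℤ × ℤ)} {μ : ℚ} {v : ℤ × ℤ}
    (h : v ∈ ltSlope V μ) : slope v < μ := by
  simpa using (List.mem_filter.mp h).2

lemma delta_self_eq_add_cross (V : List (ℤ × ℤ)) (μ : ℚ) :
    delta V V = delta (geSlope V μ) (geSlope V μ) + delta (ltSlope V μ) (ltSlope V μ) +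
      cross (rk (ltSlope V μ), deg (ltSlope V μ)) (rk (geSlope V μ), deg (geSlope V μ)) := by
  have hperm := geSlope_append_ltSlope_perm V μ
  have hge_lt : ∀ e ∈ geSlope V μ, ∀ f ∈ ltSlope V μ, slope f < slope e := fun e he f hf =>
    (slope_lt_of_mem_ltSlope hf).trans_le (slope_le_of_mem_geSlope he)
  have hlt_ge : ∀ e ∈ ltSlope V μ, ∀ f ∈ geSlope V μ, slope e ≤ slope f := fun e he f hf =>
    (hge_lt f hf e he).le
  rw [← delta_perm hperm hperm, delta_append_left, delta_append_right, delta_append_right,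
    delta_eq_zero_of_forall_slope_lt hge_lt, delta_eq_cross_of_forall_slope_le hlt_ge]
  ring

lemma cross_rk_deg_pos {E F : List (ℤ × ℤ)} (hE : ∀ e ∈ E, 0 < e.1) (hF : ∀ f ∈ F, 0 < f.1)
    (h : ∀ e ∈ E, ∀ f ∈ F, slope e < slope f) (hE₀ : E ≠ []) (hF₀ : F ≠ []) :
    0 < cross (rk E, deg E) (rk F, deg F) := by
  rw [cross_rk_deg_eq_sum_sum]
  refine List.sum_pos _ (fun x hx => ?_) (by simpa using hE₀)
  obtain ⟨e, he, rfl⟩ := List.mem_map.mp hx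
  refine List.sum_pos _ (fun y hy => ?_) (by simpa using hF₀)
  obtain ⟨f, hf, rfl⟩ := List.mem_map.mp hy
  exact cross_pos_of_slope_lt (hE e he) (hF f hf) (h e he f hf)

lemma cross_rk_deg_eq_zero_iff {E F : List (ℤ × ℤ)} (hE : ∀ e ∈ E, 0 < e.1)
    (hF : ∀ f ∈ F, 0 < f.1) (h : ∀ e ∈ E, ∀ f ∈ F, slope e < slope f) :
    cross (rk E, deg E) (rk F, deg F) = 0 ↔ E = [] ∨ F = [] := by
  refine ⟨fun h₀ => ?_, fun hnil => ?_⟩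
  · by_contra hne
    push Not at hne
    exact (cross_rk_deg_pos hE hF h hne.1 hne.2).ne' h₀
  · rcases hnil with rfl | rfl <;> simp [cross, rk, deg]

lemma cross_rk_deg_nonneg {E F : List (ℤ × ℤ)} (hE : ∀ e ∈ E, 0 < e.1)
    (hF : ∀ f ∈ F, 0 < f.1) (h : ∀ e ∈ E, ∀ f ∈ F, slope e < slope f) :
    0 ≤ cross (rk E, deg E) (rk F, deg F) := by
  by_cases hnil : E = [] ∨ F = []
  · exact ((cross_rk_deg_eq_zero_iff hE hF h).mpr hnil).ge
  · push Not at hnil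
    exact (cross_rk_deg_pos hE hF h hnil.1 hnil.2).le

/-- δ(V,V) − δ(V^{≥μ},V^{≥μ}) − δ(V^{<μ},V^{<μ}) is the cross product of the
total vectors of V^{<μ} and V^{≥μ}; in particular it is nonnegative, and it
vanishes iff one of the two parts is empty. -/
theorem statement12 (V : List (ℤ × ℤ)) (hV : IsHNDatum V) (μ : ℚ) :
    delta V V - delta (geSlope V μ) (geSlope V μ) - delta (ltSlope V μ) (ltSlope V μ) =
        cross (rk (ltSlope V μ), deg (ltSlope V μ)) (rk (geSlope V μ), deg (geSlope V μ)) ∧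
      delta (geSlope V μ) (geSlope V μ) + delta (ltSlope V μ) (ltSlope V μ) ≤ delta V V ∧
      (delta (geSlope V μ) (geSlope V μ) + delta (ltSlope V μ) (ltSlope V μ) = delta V V ↔
        geSlope V μ = [] ∨ ltSlope V μ = []) := by
  have hsplit := delta_self_eq_add_cross V μ
  have hrk_ge : ∀ v ∈ geSlope V μ, 0 < v.1 := fun v hv => hV.1 v (List.mem_of_mem_filter hv)
  have hrk_lt : ∀ v ∈ ltSlope V μ, 0 < v.1 := fun v hv => hV.1 v (List.mem_of_mem_filter hv)
  have hslope : ∀ e ∈ ltSlope V μ, ∀ f ∈ geSlope V μ, slope e < slope f := fun e he f hf =>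
    (slope_lt_of_mem_ltSlope he).trans_le (slope_le_of_mem_geSlope hf)
  have hnonneg := cross_rk_deg_nonneg hrk_lt hrk_ge hslope
  refine ⟨by linarith, by linarith, ?_⟩
  rw [or_comm, ← cross_rk_deg_eq_zero_iff hrk_lt hrk_ge hslope]
  constructor <;> intro <;> linarith

end HN
end

section
/- Let S be a nonempty semistable HN datum and let A, B be HN data such that A slopewise dominates B. Then δ(S, B) ≤ δ(S, A). -/
/-!
Write σ(F) (`sigmaList F`) for the multiset of slopes of F, each slope μ(f) repeated rk(f) times.
For a single entry s of positive rank, δ([s], F) = rk(s) · Σ_{x ∈ σ(F)} max(x − μ(s), 0).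
Slopewise dominance of A over B says that, for every t, σ(A) has at least as many elements ≥ t
as σ(B); such a counting domination bounds the sums of any monotone nonnegative function, by
matching the largest element of σ(B) with an element of σ(A) that is at least as large and
inducting. Finally δ(E, F) is the sum of δ([e], F) over the entries e of E.
-/

namespace HN

theorem _root_.Multiset.sum_map_le_sum_map_of_card_filter_le {α β : Type*} [LinearOrder α]
    [AddCommMonoid β] [PartialOrder β] [IsOrderedAddMonoid β] {f : α → β} (hf : Monotone f)
    (hf0 : ∀ x, 0 ≤ f x) {M L : Multiset α}
    (h : ∀ t, (M.filter (t ≤ ·)).card ≤ (L.filter (t ≤ ·)).card) :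
    (M.map f).sum ≤ (L.map f).sum := by
  induction M using Multiset.strongInductionOn generalizing L with
  | ih M ih =>
  rcases M.empty_or_exists_mem with rfl | ⟨a, ha⟩
  · simpa using Multiset.sum_nonneg fun x hx => by
      obtain ⟨y, -, rfl⟩ := Multiset.mem_map.1 hx
      exact hf0 y
  obtain ⟨m, hmM, hmax⟩ := M.toFinset.exists_max_image id ⟨a, Multiset.mem_toFinset.2 ha⟩
  rw [Multiset.mem_toFinset] at hmM
  obtain ⟨ℓ, hℓL, hmℓ⟩ : ∃ ℓ ∈ L, m ≤ ℓ := by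
    have hpos : 0 < (L.filter (m ≤ ·)).card :=
      (Multiset.card_pos_iff_exists_mem.2 ⟨m, Multiset.mem_filter.2 ⟨hmM, le_rfl⟩⟩).trans_le (h m)
    obtain ⟨ℓ, hℓ⟩ := Multiset.card_pos_iff_exists_mem.1 hpos
    exact ⟨ℓ, Multiset.mem_filter.1 hℓ⟩
  have hdom : ∀ t, ((M.erase m).filter (t ≤ ·)).card ≤ ((L.erase ℓ).filter (t ≤ ·)).card := by
    intro t
    by_cases htm : t ≤ m
    · have := h t
      rw [← Multiset.cons_erase hmM, ← Multiset.cons_erase hℓL,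
        Multiset.filter_cons_of_pos _ htm, Multiset.filter_cons_of_pos _ (htm.trans hmℓ),
        Multiset.card_cons, Multiset.card_cons] at this
      exact Nat.le_of_succ_le_succ this
    · rw [Multiset.filter_eq_nil.2 fun x hx htx =>
        htm (htx.trans (hmax x (Multiset.mem_toFinset.2 (Multiset.mem_of_mem_erase hx))))]
      simp
  rw [← Multiset.cons_erase hmM, ← Multiset.cons_erase hℓL, Multiset.map_cons, Multiset.map_cons,
    Multiset.sum_cons, Multiset.sum_cons]
  exact add_le_add (hf hmℓ) (ih _ (Multiset.erase_lt.2 hmM) hdom)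

theorem length_filter_sigmaList (X : List (ℤ × ℤ)) (hX : ∀ v ∈ X, 0 ≤ v.1) (t : ℚ) :
    (((sigmaList X).filter (t ≤ ·)).length : ℤ) = rk (geSlope X t) := by
  induction X with
  | nil => rfl
  | cons v X ih =>
    have hv := hX v List.mem_cons_self
    have := ih fun w hw => hX w (List.mem_cons_of_mem v hw)
    simp only [sigmaList, geSlope, rk] at this ⊢
    by_cases htv : t ≤ slope v <;> simp [htv, hv, this]

theorem cast_cross_eq {v w : ℤ × ℤ} (hv : v.1 ≠ 0) (hw : w.1 ≠ 0) :
    (cross v w : ℚ) = v.1 * (w.1 * (slope w - slope v)) := by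
  simp only [cross, slope]
  field_simp
  push_cast
  ring

theorem delta_singleton_eq {s : ℤ × ℤ} (hs : s.1 ≠ 0) (X : List (ℤ × ℤ)) (hX : ∀ v ∈ X, 0 < v.1) :
    (delta [s] X : ℚ) = s.1 * ((sigmaList X).map fun x => max (x - slope s) 0).sum := by
  induction X with
  | nil => simp [delta, sigmaList]
  | cons f X ih =>
    have hf := hX f List.mem_cons_self
    have := ih fun w hw => hX w (List.mem_cons_of_mem f hw)
    simp only [delta, sigmaList, List.map_cons, List.map_nil, List.sum_cons, List.sum_nil, add_zero,
      List.flatMap_cons, List.map_append, List.sum_append, List.map_replicate, List.sum_replicate,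
      nsmul_eq_mul, List.filter_cons] at this ⊢
    have hf1 : ((f.1.toNat : ℕ) : ℚ) = f.1 := by exact_mod_cast Int.toNat_of_nonneg hf.le
    rw [hf1, mul_add, ← this]
    by_cases hsf : slope s ≤ slope f
    · simp [hsf, cast_cross_eq hs hf.ne']
    · simp [hsf, max_eq_right (sub_nonpos.2 (not_le.1 hsf).le)]

theorem SlopewiseDom.card_filter_sigmaList_le {A B : List (ℤ × ℤ)} (h : SlopewiseDom A B)
    (hA : ∀ v ∈ A, 0 ≤ v.1) (hB : ∀ v ∈ B, 0 ≤ v.1) (t : ℚ) :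
    ((sigmaList B : Multiset ℚ).filter (t ≤ ·)).card ≤
      ((sigmaList A : Multiset ℚ).filter (t ≤ ·)).card := by
  have := h t
  rw [← length_filter_sigmaList B hB, ← length_filter_sigmaList A hA] at this
  simpa using this

theorem delta_singleton_le_of_slopewiseDom {s : ℤ × ℤ} (hs : 0 < s.1) {A B : List (ℤ × ℤ)}
    (hA : ∀ v ∈ A, 0 < v.1) (hB : ∀ v ∈ B, 0 < v.1) (h : SlopewiseDom A B) :
    delta [s] B ≤ delta [s] A := by
  have hsum : ((sigmaList B).map fun x => max (x - slope s) 0).sum ≤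
      ((sigmaList A).map fun x => max (x - slope s) 0).sum := by
    simpa using Multiset.sum_map_le_sum_map_of_card_filter_le
      (fun x y hxy => max_le_max_right 0 (sub_le_sub_right hxy _)) (fun x => le_max_right _ 0)
      (h.card_filter_sigmaList_le (fun v hv => (hA v hv).le) fun v hv => (hB v hv).le)
  have : (delta [s] B : ℚ) ≤ delta [s] A := by
    rw [delta_singleton_eq hs.ne' B hB, delta_singleton_eq hs.ne' A hA]
    exact mul_le_mul_of_nonneg_left hsum (by exact_mod_cast hs.le)
  exact_mod_cast this

theorem delta_eq_sum_delta_singleton (E F : List (ℤ × ℤ)) :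
    delta E F = (E.map fun e => delta [e] F).sum := by
  simp [delta]

theorem delta_le_delta_of_slopewiseDom {E A B : List (ℤ × ℤ)} (hE : ∀ v ∈ E, 0 < v.1)
    (hA : ∀ v ∈ A, 0 < v.1) (hB : ∀ v ∈ B, 0 < v.1) (h : SlopewiseDom A B) :
    delta E B ≤ delta E A := by
  rw [delta_eq_sum_delta_singleton, delta_eq_sum_delta_singleton]
  exact List.sum_le_sum fun e he => delta_singleton_le_of_slopewiseDom (hE e he) hA hB h

theorem statement13_general (S A B : List (ℤ × ℤ))
    (hS : IsHNDatum S) (hA : IsHNDatum A) (hB : IsHNDatum B)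
    (h : SlopewiseDom A B) :
    delta S B ≤ delta S A :=
  delta_le_delta_of_slopewiseDom hS.1 hA.1 hB.1 h

/-- If A slopewise dominates B then δ(S,B) ≤ δ(S,A) for S nonempty semistable. -/
theorem statement13 (S A B : List (ℤ × ℤ))
    (hS : IsHNDatum S) (hA : IsHNDatum A) (hB : IsHNDatum B)
    (hSne : S ≠ []) (hSss : S.length ≤ 1)
    (h : SlopewiseDom A B) :
    delta S B ≤ delta S A :=
  statement13_general S A B hS hA hB h

end HN
end

section
/- Let S be a nonempty semistable HN datum and let A, B be HN data such that A^∨ slopewise dominates B^∨ (equivalently, rk(A^{≤μ}) ≥ rk(B^{≤μ}) for every μ ∈ ℚ). Then δ(B, S) ≤ δ(A, S). -/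
/-! For semistable `S = [s]` every summand of `δ(E, S)` equals `rk s · rk e · (μ(s) - μ(e))⁺`,
so `δ(E, S) = rk s · ∫_{-∞}^{μ(s)} rk(E^{≤t}) dt`, and the hypothesis is exactly the pointwise
inequality `rk(B^{≤t}) ≤ rk(A^{≤t})` between the integrands. The integral is a piecewise linear
function of its upper limit whose slope on each piece is `rk(E^{≤t})` at the left breakpoint, so the
comparison follows by induction on the breakpoints. -/

namespace HN

section Ramp

variable {α 𝕜 : Type*} [CommRing 𝕜] [LinearOrder 𝕜] [IsStrictOrderedRing 𝕜] (w m : α → 𝕜)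

def cumWeight (l : List α) (t : 𝕜) : 𝕜 := (l.map fun a => if m a ≤ t then w a else 0).sum

def rampSum (l : List α) (x : 𝕜) : 𝕜 := (l.map fun a => w a * max (x - m a) 0).sum

variable {w m}

lemma rampSum_eq_zero {l : List α} {x : 𝕜} (hx : ∀ b ∈ l, x ≤ m b) : rampSum w m l x = 0 := by
  refine List.sum_eq_zero fun c hc => ?_
  obtain ⟨b, hb, rfl⟩ := List.mem_map.1 hc
  simp [max_eq_right (sub_nonpos.2 (hx b hb))]

lemma rampSum_eq_add {l : List α} {a x : 𝕜} (hax : a ≤ x) (hgap : ∀ b ∈ l, a < m b → x ≤ m b) :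
    rampSum w m l x = rampSum w m l a + cumWeight w m l a * (x - a) := by
  rw [rampSum, rampSum, cumWeight, ← List.sum_map_mul_right, ← List.sum_map_add]
  refine congrArg List.sum (List.map_congr_left fun b hb => ?_)
  by_cases hba : m b ≤ a
  · rw [if_pos hba, max_eq_left (by linarith), max_eq_left (by linarith)]
    ring
  · have hxb := hgap b hb (not_le.1 hba)
    rw [if_neg hba, max_eq_right (by linarith), max_eq_right (by linarith)]
    ring

theorem rampSum_le_of_cumWeight_le {P Q : List α} (h : ∀ t, cumWeight w m Q t ≤ cumWeight w m P t)
    (x : 𝕜) : rampSum w m Q x ≤ rampSum w m P x := by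
  suffices ∀ T : Finset 𝕜, ∀ x, (∀ b ∈ P ++ Q, m b < x → m b ∈ T) →
      rampSum w m Q x ≤ rampSum w m P x from
    this ((P ++ Q).map m).toFinset x fun b hb _ => List.mem_toFinset.2 (List.mem_map_of_mem hb)
  intro T
  induction T using Finset.induction_on_max with
  | empty =>
    intro x hx
    have hle : ∀ b ∈ P ++ Q, x ≤ m b := fun b hb => not_lt.1 fun hbx => by simpa using hx b hb hbx
    rw [rampSum_eq_zero fun b hb => hle b (List.mem_append_right P hb),
      rampSum_eq_zero fun b hb => hle b (List.mem_append_left Q hb)]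
  | insert a T hTa ih =>
    intro x hx
    by_cases hax : a < x
    · have hgap : ∀ b ∈ P ++ Q, a < m b → x ≤ m b := fun b hb hab => not_lt.1 fun hbx =>
        (Finset.mem_insert.1 (hx b hb hbx)).elim hab.ne' fun hbT => (hTa _ hbT).not_gt hab
      have ih_a := ih a fun b hb hba =>
        (Finset.mem_insert.1 (hx b hb (hba.trans hax))).resolve_left hba.ne
      rw [rampSum_eq_add hax.le fun b hb => hgap b (List.mem_append_right P hb),
        rampSum_eq_add hax.le fun b hb => hgap b (List.mem_append_left Q hb)]
      exact add_le_add ih_a (mul_le_mul_of_nonneg_right (h a) (sub_nonneg.2 hax.le))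
    · exact ih x fun b hb hbx =>
        (Finset.mem_insert.1 (hx b hb hbx)).resolve_left (hbx.trans_le (not_lt.1 hax)).ne

end Ramp

lemma slope_neg_snd (v : ℤ × ℤ) : slope (v.1, -v.2) = -slope v := by
  simp [slope, neg_div]

lemma cross_eq_mul_sub_slope {e s : ℤ × ℤ} (he : e.1 ≠ 0) (hs : s.1 ≠ 0) :
    (cross e s : ℚ) = e.1 * s.1 * (slope s - slope e) := by
  simp only [cross, slope]
  push_cast
  field_simp

lemma delta_singleton {E : List (ℤ × ℤ)} {s : ℤ × ℤ} (hE : ∀ e ∈ E, e.1 ≠ 0) (hs : s.1 ≠ 0) :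
    (delta E [s] : ℚ) = s.1 * rampSum (fun e => (e.1 : ℚ)) slope E (slope s) := by
  rw [delta, rampSum, ← List.sum_map_mul_left]
  push_cast
  rw [List.map_map]
  refine congrArg List.sum (List.map_congr_left fun e he => ?_)
  by_cases hes : slope e ≤ slope s
  · simp only [Function.comp_apply, hes, decide_true, List.filter_cons_of_pos, List.filter_nil,
      List.map_cons, List.map_nil, List.sum_cons, List.sum_nil, add_zero,
      cross_eq_mul_sub_slope (hE e he) hs, sub_nonneg, sup_of_le_left]
    ring
  · simp [hes, (not_le.1 hes).le]

lemma rk_geSlope_dual_neg (E : List (ℤ × ℤ)) (t : ℚ) :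
    (rk (geSlope (dual E) (-t)) : ℚ) = cumWeight (fun e => (e.1 : ℚ)) slope E t := by
  induction E with
  | nil => simp [rk, geSlope, dual, cumWeight]
  | cons e E ih =>
    simp only [rk, geSlope, dual, cumWeight, List.map_cons, List.reverse_cons, List.filter_append,
      List.map_append, List.sum_append, List.sum_cons] at ih ⊢
    rw [Int.cast_add, ih, add_comm]
    by_cases het : slope e ≤ t <;> simp [slope_neg_snd, het]

/-- If A^∨ slopewise dominates B^∨ then δ(B,S) ≤ δ(A,S) for S nonempty semistable. -/
theorem statement14 (S A B : List (ℤ × ℤ))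
    (hS : IsHNDatum S) (hA : IsHNDatum A) (hB : IsHNDatum B)
    (hSne : S ≠ []) (hSss : S.length ≤ 1)
    (h : SlopewiseDom (dual A) (dual B)) :
    delta B S ≤ delta A S := by
  obtain ⟨s, rfl⟩ := List.length_eq_one_iff.1 (le_antisymm hSss (List.length_pos_iff.2 hSne))
  have hs : 0 < s.1 := hS.1 s (List.mem_singleton_self s)
  have hrk {E} (hE : IsHNDatum E) : ∀ e ∈ E, e.1 ≠ 0 := fun e he => by linarith [hE.1 e he]
  have hcum (t : ℚ) :
      cumWeight (fun e => (e.1 : ℚ)) slope B t ≤ cumWeight (fun e => (e.1 : ℚ)) slope A t := by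
    rw [← rk_geSlope_dual_neg, ← rk_geSlope_dual_neg]
    exact_mod_cast h (-t)
  have hδ : (delta B [s] : ℚ) ≤ delta A [s] := by
    rw [delta_singleton (hrk hB) hs.ne', delta_singleton (hrk hA) hs.ne']
    exact mul_le_mul_of_nonneg_left (rampSum_le_of_cumWeight_le hcum _) (by exact_mod_cast hs.le)
  exact_mod_cast hδ

end HN
end

section
/- Let D, F, V be nonempty HN data with μ_max(D) ≤ μ_min(F), rk(V) = rk(D) + rk(F) and deg(V) = deg(D) + deg(F). Then δ(D, V) − δ(D, F) = δ(V, D) and δ(V, F) − δ(D, F) = δ(F, V). -/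
/-!
The pairs with `μ(e) = μ(f)` contribute `e × f = 0`, so `δ(E, F) − δ(F, E)` is the sum of
`e × f` over all pairs, i.e. `(rk E, deg E) × (rk F, deg F)`. When every slope of `D` is at most
every slope of `F`, `δ(D, F)` is the same full sum. Both identities then follow from the
bilinearity and antisymmetry of `×`, writing `(rk V, deg V) = (rk D, deg D) + (rk F, deg F)`.
-/

namespace HN

def total (E : List (ℤ × ℤ)) : ℤ × ℤ := (rk E, deg E)

lemma cross_total_cons_left (e : ℤ × ℤ) (E : List (ℤ × ℤ)) (w : ℤ × ℤ) :
    cross (total (e :: E)) w = cross e w + cross (total E) w := by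
  simp only [total, rk, deg, cross, List.map_cons, List.sum_cons]
  ring

lemma cross_total_cons_right (v f : ℤ × ℤ) (F : List (ℤ × ℤ)) :
    cross v (total (f :: F)) = cross v f + cross v (total F) := by
  simp only [total, rk, deg, cross, List.map_cons, List.sum_cons]
  ring

lemma cross_total_nil_left (w : ℤ × ℤ) : cross (total []) w = 0 := by
  simp [total, rk, deg, cross]

lemma cross_total_nil_right (v : ℤ × ℤ) : cross v (total []) = 0 := by
  simp [total, rk, deg, cross]

lemma cross_eq_zero_of_slope_eq {e f : ℤ × ℤ} (he : e.1 ≠ 0) (hf : f.1 ≠ 0)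
    (h : slope e = slope f) : cross e f = 0 := by
  rw [slope, slope, div_eq_div_iff (by exact_mod_cast he) (by exact_mod_cast hf)] at h
  have h' : e.2 * f.1 = f.2 * e.1 := by exact_mod_cast h
  rw [cross, h']
  ring

lemma delta_nil_left (F : List (ℤ × ℤ)) : delta [] F = 0 := rfl

lemma delta_nil_right (E : List (ℤ × ℤ)) : delta E [] = 0 := by
  simp [delta]

lemma delta_cons_left (e : ℤ × ℤ) (E F : List (ℤ × ℤ)) :
    delta (e :: E) F = delta [e] F + delta E F := by
  simp [delta]

lemma delta_cons_right (E : List (ℤ × ℤ)) (f : ℤ × ℤ) (F : List (ℤ × ℤ)) :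
    delta E (f :: F) = delta E [f] + delta E F := by
  induction E with
  | nil => rfl
  | cons e E ih =>
    rw [delta_cons_left, ih, delta_cons_left e E [f], delta_cons_left e E F]
    by_cases h : slope e ≤ slope f <;> simp [delta, List.filter_cons, h] <;> ring

lemma delta_singleton_s15 (e f : ℤ × ℤ) :
    delta [e] [f] = if slope e ≤ slope f then cross e f else 0 := by
  by_cases h : slope e ≤ slope f <;> simp [delta, List.filter_cons, h]

lemma delta_singleton_sub_delta_singleton {e f : ℤ × ℤ} (he : e.1 ≠ 0) (hf : f.1 ≠ 0) :
    delta [e] [f] - delta [f] [e] = cross e f := by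
  rw [delta_singleton_s15, delta_singleton_s15]
  rcases lt_trichotomy (slope e) (slope f) with h | h | h
  · simp [h.le, not_le.mpr h]
  · have hef := cross_eq_zero_of_slope_eq he hf h
    have hfe := cross_eq_zero_of_slope_eq hf he h.symm
    simp [h, hef, hfe]
  · simp only [not_le.mpr h, h.le, if_true, if_false, cross]
    ring

lemma delta_singleton_sub_delta_swap {e : ℤ × ℤ} {F : List (ℤ × ℤ)} (he : e.1 ≠ 0)
    (hF : ∀ f ∈ F, f.1 ≠ 0) : delta [e] F - delta F [e] = cross e (total F) := by
  induction F with
  | nil => simp [delta_nil_right, delta_nil_left, cross_total_nil_right]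
  | cons f F ih =>
    have hf := delta_singleton_sub_delta_singleton he (hF f List.mem_cons_self)
    rw [delta_cons_right, delta_cons_left f F, cross_total_cons_right,
      ← ih fun g hg => hF g (List.mem_cons_of_mem f hg), ← hf]
    ring

lemma delta_sub_delta_swap {E F : List (ℤ × ℤ)} (hE : ∀ e ∈ E, e.1 ≠ 0)
    (hF : ∀ f ∈ F, f.1 ≠ 0) : delta E F - delta F E = cross (total E) (total F) := by
  induction E with
  | nil => simp [delta_nil_right, delta_nil_left, cross_total_nil_left]
  | cons e E ih =>
    have he := delta_singleton_sub_delta_swap (hE e List.mem_cons_self) hF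
    rw [delta_cons_left e E, delta_cons_right F e E, cross_total_cons_left,
      ← ih fun g hg => hE g (List.mem_cons_of_mem e hg), ← he]
    ring

lemma delta_singleton_eq_cross_total {e : ℤ × ℤ} {F : List (ℤ × ℤ)}
    (h : ∀ f ∈ F, slope e ≤ slope f) : delta [e] F = cross e (total F) := by
  induction F with
  | nil => simp [delta_nil_right, cross_total_nil_right]
  | cons f F ih =>
    rw [delta_cons_right, cross_total_cons_right, delta_singleton_s15,
      if_pos (h f List.mem_cons_self), ih fun g hg => h g (List.mem_cons_of_mem f hg)]

lemma delta_eq_cross_total {D F : List (ℤ × ℤ)} (h : ∀ d ∈ D, ∀ f ∈ F, slope d ≤ slope f) :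
    delta D F = cross (total D) (total F) := by
  induction D with
  | nil => simp [delta_nil_left, cross_total_nil_left]
  | cons d D ih =>
    rw [delta_cons_left, cross_total_cons_left,
      delta_singleton_eq_cross_total (h d List.mem_cons_self),
      ih fun g hg => h g (List.mem_cons_of_mem d hg)]

lemma IsHNDatum.fst_ne_zero {E : List (ℤ × ℤ)} (hE : IsHNDatum E) : ∀ e ∈ E, e.1 ≠ 0 :=
  fun e he => (zero_lt_one.trans_le (hE.1 e he)).ne'

lemma IsHNDatum.slope_le_head {E : List (ℤ × ℤ)} (hE : IsHNDatum E) {e : ℤ × ℤ} (he : e ∈ E) :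
    slope e ≤ slope (E.head (List.ne_nil_of_mem he)) :=
  (hE.2.imp le_of_lt).rel_head_of_rel_head_head he le_rfl

lemma IsHNDatum.getLast_slope_le {E : List (ℤ × ℤ)} (hE : IsHNDatum E) {e : ℤ × ℤ} (he : e ∈ E) :
    slope (E.getLast (List.ne_nil_of_mem he)) ≤ slope e :=
  (hE.2.imp le_of_lt).rel_getLast_of_rel_getLast_getLast he le_rfl

theorem statement15_general (D F V : List (ℤ × ℤ))
    (hD : IsHNDatum D) (hF : IsHNDatum F) (hV : IsHNDatum V)
    (hDne : D ≠ []) (hFne : F ≠ [])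
    (hslope : slope (D.head hDne) ≤ slope (F.getLast hFne))
    (hrk : rk V = rk D + rk F) (hdeg : deg V = deg D + deg F) :
    delta D V - delta D F = delta V D ∧ delta V F - delta D F = delta F V := by
  have hDF : delta D F = cross (total D) (total F) := delta_eq_cross_total fun d hd f hf =>
    (hD.slope_le_head hd).trans (hslope.trans (hF.getLast_slope_le hf))
  have hDV := delta_sub_delta_swap hD.fst_ne_zero hV.fst_ne_zero
  have hVF := delta_sub_delta_swap hV.fst_ne_zero hF.fst_ne_zero
  simp only [total, cross] at hDF hDV hVF
  constructor
  · linear_combination hDV - hDF - deg D * hrk + rk D * hdeg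
  · linear_combination hVF - hDF + deg F * hrk - rk F * hdeg

/-- If μ_max(D) ≤ μ_min(F), rk(V) = rk(D) + rk(F) and deg(V) = deg(D) + deg(F),
then δ(D,V) − δ(D,F) = δ(V,D) and δ(V,F) − δ(D,F) = δ(F,V). -/
theorem statement15 (D F V : List (ℤ × ℤ))
    (hD : IsHNDatum D) (hF : IsHNDatum F) (hV : IsHNDatum V)
    (hDne : D ≠ []) (hFne : F ≠ []) (hVne : V ≠ [])
    (hslope : slope (D.head hDne) ≤ slope (F.getLast hFne))
    (hrk : rk V = rk D + rk F) (hdeg : deg V = deg D + deg F) :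
    delta D V - delta D F = delta V D ∧ delta V F - delta D F = delta F V :=
  statement15_general D F V hD hF hV hDne hFne hslope hrk hdeg

end HN
end
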